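/- Let (K, v) be a henselian valued field of characteristic p > 0 such that the Artin–Schreier map x ↦ x^p - x is surjective on K. Then the value group Γ of v is p-divisible. -/
import Mathlib

lemma aux_as_div {K : Type*} [Field K] (p : ℕ) [Fact p.Prime] [CharP K p]
    {Γ₀ : Type*} [LinearOrderedCommGroupWithZero Γ₀]
    (v : Valuation K Γ₀)
    (hAS : Function.Surjective (fun x : K => x ^ p - x)) :
    ∀ a : K, 1 < v a → ∃ y : K, y ≠ 0 ∧ (v y) ^ p = v a := by
  intro a ha
  obtain ⟨y, hy⟩ := hAS a
  simp only at hy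
  have hp2 : 2 ≤ p := (Fact.out : p.Prime).two_le
  have hvy : 1 < v y := by
    by_contra h
    push_neg at h
    have : v a ≤ 1 := by
      rw [← hy]
      refine Valuation.map_sub_le _ ?_ ?_
      · rw [map_pow]; exact pow_le_one₀ zero_le' h
      · exact h
    exact absurd this (not_le.mpr ha)
  have hy0 : y ≠ 0 := by
    rintro rfl; simp at hvy
  refine ⟨y, hy0, ?_⟩
  have hlt : v y < v (y ^ p) := by
    rw [map_pow]
    calc v y = (v y) ^ 1 := (pow_one _).symm
    _ < (v y) ^ p := by
        apply pow_lt_pow_right₀ hvy (by omega)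
  rw [← hy, Valuation.map_sub_eq_of_lt_left _ hlt, map_pow]

theorem value_group_p_divisible_of_artin_schreier_surjective
    {K : Type*} [Field K] (p : ℕ) [Fact p.Prime] [CharP K p]
    {Γ₀ : Type*} [LinearOrderedCommGroupWithZero Γ₀]
    (v : Valuation K Γ₀)
    [HenselianLocalRing v.valuationSubring]
    (hAS : Function.Surjective (fun x : K => x ^ p - x)) :
    ∀ x : K, x ≠ 0 → ∃ y : K, y ≠ 0 ∧ (v y) ^ p = v x := by
  intro x hx
  rcases lt_trichotomy (v x) 1 with h | h | h
  · have hx' : 1 < v x⁻¹ := by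
      rw [map_inv₀]
      have h0 : v x ≠ 0 := by simpa using hx
      exact one_lt_inv₀ (lt_of_le_of_ne zero_le' (Ne.symm h0)) |>.mpr h
    obtain ⟨y, hy0, hyp⟩ := aux_as_div p v hAS x⁻¹ hx'
    refine ⟨y⁻¹, inv_ne_zero hy0, ?_⟩
    rw [map_inv₀, inv_pow, hyp, map_inv₀, inv_inv]
  · exact ⟨1, one_ne_zero, by simp [h]⟩
  · exact aux_as_div p v hAS x h
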